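/- Let N ≥ 2 be an integer and 1 < p ≤ 3/2. If k ∈ [-(N-1)/(p-1), 0), then E_{p,N,k}[cos](θ) ≤ 0 for every θ ∈ (0, π/2); that is, the quasiradial function u = r^k·cos(θ) is p-superharmonic in the upper half-space ℝ^N₊. -/
import Mathlib


noncomputable section
open Real Set

/-- The differential expression `E_{p,N,k}[f](θ)` whose sign coincides with the sign of the
`p`-Laplacian of the quasiradial function `u(r,θ) = r^k · f(θ)` in the upper half-space. -/
def Ecal (p : ℝ) (N : ℕ) (k : ℝ) (f : ℝ → ℝ) (θ : ℝ) : ℝ :=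
  ((p - 1) * (deriv f θ) ^ 2 + k ^ 2 * (f θ) ^ 2) * deriv (deriv f) θ
    + k * ((2 * p - 3) * k + (N : ℝ) - p) * f θ * (deriv f θ) ^ 2
    + k ^ 3 * (k * (p - 1) + (N : ℝ) - p) * (f θ) ^ 3
    + ((N : ℝ) - 2) * ((deriv f θ) ^ 2 + k ^ 2 * (f θ) ^ 2) * deriv f θ * Real.cot θ

/-- For `1 < p ≤ 3/2` and `k ∈ [-(N-1)/(p-1), 0)`, `u = r^k cos θ` is `p`-superharmonic:
`E_{p,N,k}[cos] ≤ 0` on `(0, π/2)`. -/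
theorem Ecal_cos_nonpos_of_small_p (N : ℕ) (hN : 2 ≤ N) (p : ℝ) (hp1 : 1 < p)
    (hp2 : p ≤ 3 / 2) (k : ℝ) (hk : k ∈ Ico (-(((N : ℝ) - 1) / (p - 1))) 0) :
    ∀ θ ∈ Ioo (0 : ℝ) (π / 2), Ecal p N k Real.cos θ ≤ 0 := by
  intro θ hθ
  have hpi := Real.pi_pos
  have hs : 0 < Real.sin θ := Real.sin_pos_of_pos_of_lt_pi hθ.1 (by linarith [hθ.2])
  have hc : 0 < Real.cos θ := Real.cos_pos_of_mem_Ioo ⟨by linarith [hθ.1], hθ.2⟩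
  have h1 : deriv Real.cos = fun x => -Real.sin x := Real.deriv_cos'
  have h2 : deriv (deriv Real.cos) θ = -Real.cos θ := by
    rw [h1]; simp
  have hN2 : (2 : ℝ) ≤ (N : ℝ) := by exact_mod_cast hN
  have hk0 : k < 0 := hk.2
  have hp' : (0 : ℝ) < p - 1 := by linarith
  have h3 : -k * (p - 1) ≤ (N : ℝ) - 1 := by
    rw [← le_div_iff₀ hp']
    linarith [hk.1]
  have hkey : Ecal p N k Real.cos θ
      = Real.cos θ * (((2 * p - 3) * k ^ 2 + ((N : ℝ) - p) * k - (p - 1) - ((N : ℝ) - 2))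
          * (Real.sin θ) ^ 2
        + (k ^ 2 * ((p - 1) * k + ((N : ℝ) - 1)) * (k - 1)) * (Real.cos θ) ^ 2) := by
    unfold Ecal
    rw [h2, h1, Real.cot_eq_cos_div_sin]
    field_simp
    ring
  have hA : (2 * p - 3) * k ^ 2 + ((N : ℝ) - p) * k - (p - 1) - ((N : ℝ) - 2) ≤ 0 := by
    nlinarith [sq_nonneg k, mul_nonneg (by linarith : (0:ℝ) ≤ 3 - 2*p) (sq_nonneg k)]
  have hB : k ^ 2 * ((p - 1) * k + ((N : ℝ) - 1)) * (k - 1) ≤ 0 := by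
    have hX : 0 ≤ (p - 1) * k + ((N : ℝ) - 1) := by nlinarith
    have := mul_nonneg (sq_nonneg k) hX
    nlinarith
  rw [hkey]
  have t1 := mul_nonpos_of_nonpos_of_nonneg hA (sq_nonneg (Real.sin θ))
  have t2 := mul_nonpos_of_nonpos_of_nonneg hB (sq_nonneg (Real.cos θ))
  nlinarith
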